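/- Let X be a 0-dimensional space and let P, K be compact subsets of X × ℕ^ℕ. If f : P → K is a homeomorphism and g is an autohomeomorphism of X such that g ∘ π_X = π_X ∘ f (where π_X : X × ℕ^ℕ → X is the projection), then f can be extended to a homeomorphism f̃ of X × ℕ^ℕ onto itself such that g ∘ π_X = π_X ∘ f̃. -/

import Mathlib

open Topology Set
open scoped Classical


section Kmach

variable (a : ℕ → ℤ)
variable (σ : ∀ n : ℕ, {m : ℤ // a n < |m|} ≃ {pq : ℤ × ℤ // a n < |pq.1| ∨ pq.2 ≠ 0})

noncomputable def sigT (n : ℕ) (m : ℤ) : ℤ × ℤ :=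
  if h : a n < |m| then ((σ n ⟨m, h⟩ : {pq : ℤ × ℤ // a n < |pq.1| ∨ pq.2 ≠ 0}) : ℤ × ℤ) else (0, 0)

noncomputable def tauT (n : ℕ) (pq : ℤ × ℤ) : ℤ :=
  if h : a n < |pq.1| ∨ pq.2 ≠ 0 then ((σ n).symm ⟨pq, h⟩ : ℤ) else 0

lemma sigT_mem {n : ℕ} {m : ℤ} (h : a n < |m|) :
    a n < |(sigT a σ n m).1| ∨ (sigT a σ n m).2 ≠ 0 := by
  rw [sigT, dif_pos h]; exact (σ n ⟨m, h⟩).2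

lemma tauT_sigT {n : ℕ} {m : ℤ} (h : a n < |m|) : tauT a σ n (sigT a σ n m) = m := by
  rw [sigT, dif_pos h, tauT, dif_pos (σ n ⟨m, h⟩).2]
  have : (⟨((σ n ⟨m, h⟩ : _) : ℤ × ℤ), (σ n ⟨m, h⟩).2⟩ :
      {pq : ℤ × ℤ // a n < |pq.1| ∨ pq.2 ≠ 0}) = σ n ⟨m, h⟩ := Subtype.ext rfl
  rw [this, Equiv.symm_apply_apply]

lemma tauT_mem {n : ℕ} {pq : ℤ × ℤ} (h : a n < |pq.1| ∨ pq.2 ≠ 0) :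
    a n < |tauT a σ n pq| := by
  rw [tauT, dif_pos h]; exact ((σ n).symm ⟨pq, h⟩).2

lemma sigT_tauT {n : ℕ} {pq : ℤ × ℤ} (h : a n < |pq.1| ∨ pq.2 ≠ 0) :
    sigT a σ n (tauT a σ n pq) = pq := by
  rw [tauT, dif_pos h, sigT, dif_pos ((σ n).symm ⟨pq, h⟩).2]
  have : (⟨(((σ n).symm ⟨pq, h⟩ : _) : ℤ), ((σ n).symm ⟨pq, h⟩).2⟩ :
      {m : ℤ // a n < |m|}) = (σ n).symm ⟨pq, h⟩ := Subtype.ext rfl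
  rw [this, Equiv.apply_symm_apply]

noncomputable def kU (n : ℕ) (z : ℕ → ℤ) (i : ℕ) : ℤ :=
  if i < n then z i else if i = n then (sigT a σ n (z n)).1 else z (2*i - n - 1)

noncomputable def kV (n : ℕ) (z : ℕ → ℤ) (i : ℕ) : ℤ :=
  if i < n then 0 else if i = n then (sigT a σ n (z n)).2 else z (2*i - n)

noncomputable def kZ (n : ℕ) (u v : ℕ → ℤ) (i : ℕ) : ℤ :=
  if i < n then u i else if i = n then tauT a σ n (u n, v n)
  else if (i - n) % 2 = 1 then u ((i+n+1)/2) else v ((i+n)/2)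

variable {n i : ℕ} {z u v : ℕ → ℤ}

lemma kU_of_lt (h : i < n) : kU a σ n z i = z i := by rw [kU, if_pos h]
lemma kU_self : kU a σ n z n = (sigT a σ n (z n)).1 := by
  rw [kU, if_neg (lt_irrefl n), if_pos rfl]
lemma kU_of_gt (h : n < i) : kU a σ n z i = z (2*i - n - 1) := by
  rw [kU, if_neg (by omega), if_neg (by omega)]
lemma kV_of_lt (h : i < n) : kV a σ n z i = 0 := by rw [kV, if_pos h]
lemma kV_self : kV a σ n z n = (sigT a σ n (z n)).2 := by
  rw [kV, if_neg (lt_irrefl n), if_pos rfl]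
lemma kV_of_gt (h : n < i) : kV a σ n z i = z (2*i - n) := by
  rw [kV, if_neg (by omega), if_neg (by omega)]
lemma kZ_of_lt (h : i < n) : kZ a σ n u v i = u i := by rw [kZ, if_pos h]
lemma kZ_self : kZ a σ n u v n = tauT a σ n (u n, v n) := by
  rw [kZ, if_neg (lt_irrefl n), if_pos rfl]
lemma kZ_of_gt_odd (h : n < i) (hp : (i - n) % 2 = 1) :
    kZ a σ n u v i = u ((i+n+1)/2) := by
  rw [kZ, if_neg (by omega), if_neg (by omega), if_pos hp]
lemma kZ_of_gt_even (h : n < i) (hp : (i - n) % 2 = 0) :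
    kZ a σ n u v i = v ((i+n)/2) := by
  rw [kZ, if_neg (by omega), if_neg (by omega), if_neg (by omega)]

noncomputable def kfun (z : ℕ → ℤ) : (ℕ → ℤ) × (ℕ → ℤ) :=
  if h : ∃ n, a n < |z n| then (kU a σ (Nat.find h) z, kV a σ (Nat.find h) z) else (z, 0)

noncomputable def kinv (uv : (ℕ → ℤ) × (ℕ → ℤ)) : ℕ → ℤ :=
  if h : ∃ n, a n < |uv.1 n| ∨ uv.2 n ≠ 0 then kZ a σ (Nat.find h) uv.1 uv.2 else uv.1

lemma kfun_bounded (h : ∀ m, |z m| ≤ a m) : kfun a σ z = (z, 0) := by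
  rw [kfun, dif_neg]; push_neg; exact h

lemma kinv_kfun (z : ℕ → ℤ) : kinv a σ (kfun a σ z) = z := by
  by_cases h : ∃ n, a n < |z n|
  · rw [kfun, dif_pos h]
    set n := Nat.find h with hn_def
    have hn : a n < |z n| := Nat.find_spec h
    have hmin : ∀ i, i < n → ¬ a i < |z i| := fun i hi => Nat.find_min h hi
    have hescn : a n < |kU a σ n z n| ∨ kV a σ n z n ≠ 0 := by
      rw [kU_self, kV_self]; exact sigT_mem a σ hn
    have hex : ∃ m, a m < |kU a σ n z m| ∨ kV a σ n z m ≠ 0 := ⟨n, hescn⟩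
    rw [kinv]
    dsimp only
    rw [dif_pos hex]
    have hfind : Nat.find hex = n := by
      rw [Nat.find_eq_iff]
      refine ⟨hescn, fun i hi => ?_⟩
      rw [kU_of_lt a σ hi, kV_of_lt a σ hi]
      push_neg
      exact ⟨not_lt.mp (hmin i hi), rfl⟩
    rw [hfind]
    funext i
    rcases lt_trichotomy i n with h1 | h1 | h1
    · rw [kZ_of_lt a σ h1, kU_of_lt a σ h1]
    · subst h1
      rw [kZ_self, kU_self, kV_self]
      exact tauT_sigT a σ hn
    · by_cases hpar : (i - n) % 2 = 1
      · rw [kZ_of_gt_odd a σ h1 hpar, kU_of_gt a σ (by omega)]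
        congr 1
        omega
      · rw [kZ_of_gt_even a σ h1 (by omega), kV_of_gt a σ (by omega)]
        congr 1
        omega
  · rw [kfun, dif_neg h, kinv]
    dsimp only
    rw [dif_neg]
    push_neg
    intro m
    push_neg at h
    exact ⟨h m, rfl⟩

lemma kfun_kinv (uv : (ℕ → ℤ) × (ℕ → ℤ)) : kfun a σ (kinv a σ uv) = uv := by
  obtain ⟨u, v⟩ := uv
  by_cases h : ∃ n, a n < |u n| ∨ v n ≠ 0
  · rw [kinv]
    dsimp only
    rw [dif_pos h]
    set n := Nat.find h with hn_def
    have hn : a n < |u n| ∨ v n ≠ 0 := Nat.find_spec h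
    have hmin : ∀ i, i < n → ¬ (a i < |u i| ∨ v i ≠ 0) := fun i hi => Nat.find_min h hi
    have hescn : a n < |kZ a σ n u v n| := by
      rw [kZ_self]; exact tauT_mem a σ hn
    have hex : ∃ m, a m < |kZ a σ n u v m| := ⟨n, hescn⟩
    rw [kfun, dif_pos hex]
    have hfind : Nat.find hex = n := by
      rw [Nat.find_eq_iff]
      refine ⟨hescn, fun i hi => ?_⟩
      rw [kZ_of_lt a σ hi]
      exact fun hc => (hmin i hi) (Or.inl hc)
    rw [hfind]
    refine Prod.ext ?_ ?_ <;> funext i <;> dsimp only <;>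
      rcases lt_trichotomy i n with h1 | h1 | h1
    · rw [kU_of_lt a σ h1, kZ_of_lt a σ h1]
    · subst h1
      rw [kU_self, kZ_self]
      rw [sigT_tauT a σ hn]
    · rw [kU_of_gt a σ h1, kZ_of_gt_odd a σ (by omega) (by omega)]
      congr 1
      omega
    · rw [kV_of_lt a σ h1]
      have := hmin i h1
      push_neg at this
      exact this.2.symm
    · subst h1
      rw [kV_self, kZ_self]
      rw [sigT_tauT a σ hn]
    · rw [kV_of_gt a σ h1, kZ_of_gt_even a σ (by omega) (by omega)]
      congr 1
      omega
  · rw [kinv]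
    dsimp only
    rw [dif_neg h, kfun, dif_neg]
    · push_neg at h
      have hv : v = 0 := funext fun m => (h m).2
      rw [hv]
    · push_neg at h
      push_neg
      exact fun m => (h m).1



lemma agree_nhds (z : ℕ → ℤ) (m : ℕ) : {w : ℕ → ℤ | ∀ j ≤ m, w j = z j} ∈ 𝓝 z := by
  have : {w : ℕ → ℤ | ∀ j ≤ m, w j = z j} =
      ⋂ j ∈ Finset.range (m+1), (fun w : ℕ → ℤ => w j) ⁻¹' {z j} := by
    ext w
    simp only [Set.mem_setOf_eq, Set.mem_iInter, Finset.mem_range, Set.mem_preimage,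
      Set.mem_singleton_iff]
    constructor
    · intro hw j hj; exact hw j (by omega)
    · intro hw j hj; exact hw j (by omega)
  rw [this]
  refine IsOpen.mem_nhds ?_ ?_
  · exact isOpen_biInter_finset fun j _ => (continuous_apply j).isOpen_preimage _ (isOpen_discrete _)
  · simp

lemma agree_nhds2 (uv : (ℕ → ℤ) × (ℕ → ℤ)) (m : ℕ) :
    {w : (ℕ → ℤ) × (ℕ → ℤ) | ∀ j ≤ m, w.1 j = uv.1 j ∧ w.2 j = uv.2 j} ∈ 𝓝 uv := by
  have : {w : (ℕ → ℤ) × (ℕ → ℤ) | ∀ j ≤ m, w.1 j = uv.1 j ∧ w.2 j = uv.2 j} =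
      ⋂ j ∈ Finset.range (m+1),
        ((fun w : (ℕ → ℤ) × (ℕ → ℤ) => w.1 j) ⁻¹' {uv.1 j} ∩
         (fun w : (ℕ → ℤ) × (ℕ → ℤ) => w.2 j) ⁻¹' {uv.2 j}) := by
    ext w
    simp only [Set.mem_setOf_eq, Set.mem_iInter, Finset.mem_range, Set.mem_inter_iff,
      Set.mem_preimage, Set.mem_singleton_iff]
    constructor
    · intro hw j hj; exact hw j (by omega)
    · intro hw j hj; exact hw j (by omega)
  rw [this]
  refine IsOpen.mem_nhds ?_ ?_
  · refine isOpen_biInter_finset fun j _ => IsOpen.inter ?_ ?_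
    · exact (((continuous_apply j).comp continuous_fst).isOpen_preimage _ (isOpen_discrete _))
    · exact (((continuous_apply j).comp continuous_snd).isOpen_preimage _ (isOpen_discrete _))
  · simp

lemma kfun_eventually (z : ℕ → ℤ) (i : ℕ) :
    ∃ m, ∀ w, (∀ j ≤ m, w j = z j) →
      (kfun a σ w).1 i = (kfun a σ z).1 i ∧ (kfun a σ w).2 i = (kfun a σ z).2 i := by
  by_cases h : ∃ n, a n < |z n|
  · set n := Nat.find h with hn_def
    have hn : a n < |z n| := Nat.find_spec h
    have hmin : ∀ i, i < n → ¬ a i < |z i| := fun i hi => Nat.find_min h hi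
    refine ⟨max n (2*i), fun w hw => ?_⟩
    have hwz : ∀ j, j ≤ max n (2*i) → w j = z j := hw
    have hw' : ∃ m, a m < |w m| := ⟨n, by rw [hwz n (le_max_left _ _)]; exact hn⟩
    have hfind : Nat.find hw' = n := by
      rw [Nat.find_eq_iff]
      exact ⟨by rw [hwz n (le_max_left _ _)]; exact hn,
        fun j hj => by rw [hwz j (le_trans (le_of_lt hj) (le_max_left _ _))]; exact hmin j hj⟩
    rw [kfun, dif_pos hw', hfind, kfun, dif_pos h, ← hn_def]
    dsimp only
    rcases lt_trichotomy i n with h1 | h1 | h1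
    · rw [kU_of_lt a σ h1, kU_of_lt a σ h1, kV_of_lt a σ h1, kV_of_lt a σ h1]
      exact ⟨hwz i (le_trans (le_of_lt h1) (le_max_left _ _)), by trivial⟩
    · subst h1
      rw [kU_self, kU_self, kV_self, kV_self, hwz n (le_max_left _ _)]
      exact ⟨by trivial, by trivial⟩
    · rw [kU_of_gt a σ h1, kU_of_gt a σ h1, kV_of_gt a σ h1, kV_of_gt a σ h1,
        hwz (2*i - n - 1) (by omega), hwz (2*i - n) (by omega)]
      exact ⟨by trivial, by trivial⟩
  · refine ⟨i, fun w hw => ?_⟩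
    push_neg at h
    have hz : kfun a σ z = (z, 0) := kfun_bounded a σ h
    rw [hz]
    by_cases hw' : ∃ m, a m < |w m|
    · have hgt : i < Nat.find hw' := by
        rcases le_or_gt (Nat.find hw') i with hle | hlt
        · exfalso
          have := Nat.find_spec hw'
          rw [hw _ hle] at this
          exact absurd this (not_lt.mpr (h _))
        · exact hlt
      rw [kfun, dif_pos hw']
      dsimp only
      rw [kU_of_lt a σ hgt, kV_of_lt a σ hgt]
      exact ⟨hw i le_rfl, rfl⟩
    · rw [kfun, dif_neg hw']
      exact ⟨hw i le_rfl, rfl⟩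

lemma kinv_eventually (uv : (ℕ → ℤ) × (ℕ → ℤ)) (i : ℕ) :
    ∃ m, ∀ w : (ℕ → ℤ) × (ℕ → ℤ), (∀ j ≤ m, w.1 j = uv.1 j ∧ w.2 j = uv.2 j) →
      kinv a σ w i = kinv a σ uv i := by
  obtain ⟨u, v⟩ := uv
  by_cases h : ∃ n, a n < |u n| ∨ v n ≠ 0
  · set n := Nat.find h with hn_def
    have hn : a n < |u n| ∨ v n ≠ 0 := Nat.find_spec h
    have hmin : ∀ i, i < n → ¬ (a i < |u i| ∨ v i ≠ 0) := fun i hi => Nat.find_min h hi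
    refine ⟨max n (2*i+1), fun w hw => ?_⟩
    have hwu : ∀ j, j ≤ max n (2*i+1) → w.1 j = u j := fun j hj => (hw j hj).1
    have hwv : ∀ j, j ≤ max n (2*i+1) → w.2 j = v j := fun j hj => (hw j hj).2
    have hw' : ∃ m, a m < |w.1 m| ∨ w.2 m ≠ 0 :=
      ⟨n, by rw [hwu n (le_max_left _ _), hwv n (le_max_left _ _)]; exact hn⟩
    have hfind : Nat.find hw' = n := by
      rw [Nat.find_eq_iff]
      refine ⟨by rw [hwu n (le_max_left _ _), hwv n (le_max_left _ _)]; exact hn, fun j hj => ?_⟩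
      rw [hwu j (le_trans (le_of_lt hj) (le_max_left _ _)),
        hwv j (le_trans (le_of_lt hj) (le_max_left _ _))]
      exact hmin j hj
    rw [kinv, dif_pos hw', hfind, kinv]
    dsimp only
    rw [dif_pos h, ← hn_def]
    rcases lt_trichotomy i n with h1 | h1 | h1
    · rw [kZ_of_lt a σ h1, kZ_of_lt a σ h1]
      exact hwu i (le_trans (le_of_lt h1) (le_max_left _ _))
    · subst h1
      rw [kZ_self, kZ_self, hwu n (le_max_left _ _), hwv n (le_max_left _ _)]
    · by_cases hpar : (i - n) % 2 = 1
      · rw [kZ_of_gt_odd a σ h1 hpar, kZ_of_gt_odd a σ h1 hpar, hwu ((i+n+1)/2) (by omega)]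
      · rw [kZ_of_gt_even a σ h1 (by omega), kZ_of_gt_even a σ h1 (by omega),
          hwv ((i+n)/2) (by omega)]
  · refine ⟨i, fun w hw => ?_⟩
    have huv : kinv a σ (u, v) = u := by
      rw [kinv]
      dsimp only
      rw [dif_neg h]
    rw [huv]
    by_cases hw' : ∃ m, a m < |w.1 m| ∨ w.2 m ≠ 0
    · have hgt : i < Nat.find hw' := by
        rcases le_or_gt (Nat.find hw') i with hle | hlt
        · exfalso
          have hspec := Nat.find_spec hw'
          push_neg at h
          have hd := h (Nat.find hw')
          rcases hspec with hc | hc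
          · rw [(hw _ hle).1] at hc
            exact absurd hc (not_lt.mpr hd.1)
          · rw [(hw _ hle).2] at hc
            exact hc hd.2
        · exact hlt
      rw [kinv, dif_pos hw']
      rw [kZ_of_lt a σ hgt]
      exact (hw i le_rfl).1
    · rw [kinv, dif_neg hw']
      exact (hw i le_rfl).1

lemma kfun_continuous : Continuous (kfun a σ) := by
  have h1 : Continuous fun w => (kfun a σ w).1 := by
    refine continuous_pi fun i => ?_
    refine continuous_iff_continuousAt.mpr fun z => ?_
    rw [ContinuousAt, nhds_discrete ℤ, Filter.tendsto_pure]
    obtain ⟨m, hm⟩ := kfun_eventually a σ z i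
    exact Filter.eventually_of_mem (agree_nhds z m) fun w hw => (hm w hw).1
  have h2 : Continuous fun w => (kfun a σ w).2 := by
    refine continuous_pi fun i => ?_
    refine continuous_iff_continuousAt.mpr fun z => ?_
    rw [ContinuousAt, nhds_discrete ℤ, Filter.tendsto_pure]
    obtain ⟨m, hm⟩ := kfun_eventually a σ z i
    exact Filter.eventually_of_mem (agree_nhds z m) fun w hw => (hm w hw).2
  have : kfun a σ = fun w => ((kfun a σ w).1, (kfun a σ w).2) := rfl
  rw [this]
  exact h1.prodMk h2

lemma kinv_continuous : Continuous (kinv a σ) := by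
  refine continuous_pi fun i => ?_
  refine continuous_iff_continuousAt.mpr fun uv => ?_
  rw [ContinuousAt, nhds_discrete ℤ, Filter.tendsto_pure]
  obtain ⟨m, hm⟩ := kinv_eventually a σ uv i
  exact Filter.eventually_of_mem (agree_nhds2 uv m) fun w hw => hm w hw

/-- The homeomorphism `(ℕ → ℤ) ≃ₜ (ℕ → ℤ) × (ℕ → ℤ)` which is `z ↦ (z, 0)` on
the `a`-bounded set. -/
noncomputable def khom : (ℕ → ℤ) ≃ₜ ((ℕ → ℤ) × (ℕ → ℤ)) where
  toFun := kfun a σ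
  invFun := kinv a σ
  left_inv := kinv_kfun a σ
  right_inv := kfun_kinv a σ
  continuous_toFun := kfun_continuous a σ
  continuous_invFun := kinv_continuous a σ

lemma khom_bounded {z : ℕ → ℤ} (h : ∀ m, |z m| ≤ a m) : khom a σ z = (z, 0) :=
  kfun_bounded a σ h

lemma khom_symm_bounded {z : ℕ → ℤ} (h : ∀ m, |z m| ≤ a m) : (khom a σ).symm (z, 0) = z := by
  rw [← khom_bounded a σ h]
  exact Homeomorph.symm_apply_apply _ _

end Kmach



/-- property of having a basis of clopen sets -/
def CBPaux (W : Type*) [TopologicalSpace W] : Prop :=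
  ∀ x : W, ∀ O : Set W, IsOpen O → x ∈ O → ∃ U : Set W, IsClopen U ∧ x ∈ U ∧ U ⊆ O

section CBPauxsec

variable {W : Type*} [TopologicalSpace W] [T2Space W]

lemma cbp_point_sep (hW : CBPaux W) {x : W} {D : Set W} (hD : IsCompact D) (hx : x ∉ D) :
    ∃ U : Set W, IsClopen U ∧ x ∈ U ∧ Disjoint U D := by
  have hsep : ∀ d : W, ∃ V : Set W, d ∈ D → (IsClopen V ∧ d ∈ V ∧ x ∉ V) := by
    intro d
    by_cases hd : d ∈ D
    · have hxd : x ≠ d := fun h => hx (h ▸ hd)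
      obtain ⟨O1, O2, hO1, hO2, hx1, hd2, hdisj⟩ := t2_separation hxd
      obtain ⟨V, hV, hdV, hVO⟩ := hW d O2 hO2 hd2
      exact ⟨V, fun _ => ⟨hV, hdV, fun hxV => Set.disjoint_left.mp hdisj hx1 (hVO hxV)⟩⟩
    · exact ⟨∅, fun h => absurd h hd⟩
  choose V hV using hsep
  have hcover : D ⊆ ⋃ d ∈ D, V d := fun d hd => Set.mem_biUnion hd (hV d hd).2.1
  obtain ⟨b, hbD, hbfin, hsub⟩ := hD.elim_finite_subcover_image
    (fun d hd => ((hV d hd).1).2) hcover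
  refine ⟨(⋃ d ∈ b, V d)ᶜ, ?_, ?_, ?_⟩
  · exact (hbfin.isClopen_biUnion fun d hd => (hV d (hbD hd)).1).compl
  · intro hmem
    simp only [Set.mem_iUnion] at hmem
    obtain ⟨d, hd, hxd⟩ := hmem
    exact (hV d (hbD hd)).2.2 hxd
  · rw [Set.disjoint_left]
    intro w hw hwD
    exact hw (hsub hwD)

lemma cbp_sep (hW : CBPaux W) {C D : Set W} (hC : IsCompact C) (hD : IsCompact D)
    (hCD : Disjoint C D) : ∃ U : Set W, IsClopen U ∧ C ⊆ U ∧ Disjoint U D := by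
  have hsep : ∀ c : W, ∃ U : Set W, c ∈ C → (IsClopen U ∧ c ∈ U ∧ Disjoint U D) := by
    intro c
    by_cases hc : c ∈ C
    · obtain ⟨U, h1, h2, h3⟩ := cbp_point_sep hW hD (Set.disjoint_left.mp hCD hc)
      exact ⟨U, fun _ => ⟨h1, h2, h3⟩⟩
    · exact ⟨∅, fun h => absurd h hc⟩
  choose U hU using hsep
  have hcover : C ⊆ ⋃ c ∈ C, U c := fun c hc => Set.mem_biUnion hc (hU c hc).2.1
  obtain ⟨b, hbC, hbfin, hsub⟩ := hC.elim_finite_subcover_image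
    (fun c hc => ((hU c hc).1).2) hcover
  refine ⟨⋃ c ∈ b, U c, hbfin.isClopen_biUnion fun c hc => (hU c (hbC hc)).1, hsub, ?_⟩
  rw [Set.disjoint_left]
  intro w hw hwD
  simp only [Set.mem_iUnion] at hw
  obtain ⟨c, hc, hwc⟩ := hw
  exact Set.disjoint_left.mp (hU c (hbC hc)).2.2 hwc hwD

/-- Extension of continuous integer-valued maps from compact subsets,
in a T2 space with a clopen basis. -/
lemma cbp_extend (hW : CBPaux W) {C : Set W} (hC : IsCompact C) (u : C → ℤ)
    (hu : Continuous u) : ∃ U : W → ℤ, Continuous U ∧ ∀ c : C, U c = u c := by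
  haveI : CompactSpace C := isCompact_iff_compactSpace.mp hC
  have hfin : (Set.range u).Finite := (isCompact_range hu).finite ⟨inferInstance⟩
  set S : Finset ℤ := hfin.toFinset with hS_def
  -- compact pieces
  have hCv : ∀ v : ℤ, IsCompact (Subtype.val '' (u ⁻¹' {v}) : Set W) := fun v =>
    (((isClosed_discrete ({v} : Set ℤ)).preimage hu).isCompact).image continuous_subtype_val
  have hDv : ∀ v : ℤ, IsCompact (Subtype.val '' (u ⁻¹' {v}ᶜ) : Set W) := fun v =>
    (((isClosed_discrete (({v} : Set ℤ)ᶜ)).preimage hu).isCompact).image continuous_subtype_val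
  have hdisj : ∀ v : ℤ, Disjoint (Subtype.val '' (u ⁻¹' {v}) : Set W)
      (Subtype.val '' (u ⁻¹' {v}ᶜ) : Set W) := by
    intro v
    rw [Set.disjoint_left]
    rintro w ⟨p, hp, rfl⟩ ⟨q, hq, hqe⟩
    have : p = q := Subtype.val_injective hqe.symm
    subst this
    exact hq hp
  have hsep : ∀ v : ℤ, ∃ U : Set W, IsClopen U ∧ (Subtype.val '' (u ⁻¹' {v}) : Set W) ⊆ U ∧
      Disjoint U (Subtype.val '' (u ⁻¹' {v}ᶜ) : Set W) := fun v =>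
    cbp_sep hW (hCv v) (hDv v) (hdisj v)
  choose Uv hUv using hsep
  set Uext : W → ℤ := fun w => WithTop.untopD 0 ((S.filter (fun v => w ∈ Uv v)).min) with hUext_def
  have hfilter : ∀ c : C, S.filter (fun v => (c : W) ∈ Uv v) = {u c} := by
    intro c
    apply Finset.ext
    intro v
    simp only [Finset.mem_filter, Finset.mem_singleton]
    constructor
    · rintro ⟨hvS, hcU⟩
      by_contra hne
      have hcD : (c : W) ∈ Subtype.val '' (u ⁻¹' {v}ᶜ) :=
        ⟨c, fun h => hne (h.symm), rfl⟩
      exact Set.disjoint_left.mp (hUv v).2.2 hcU hcD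
    · rintro rfl
      refine ⟨?_, (hUv (u c)).2.1 ⟨c, rfl, rfl⟩⟩
      rw [hS_def, Set.Finite.mem_toFinset]
      exact Set.mem_range_self c
  have hext : ∀ c : C, Uext c = u c := by
    intro c
    rw [hUext_def]
    simp only
    rw [hfilter c, Finset.min_singleton]
    rfl
  refine ⟨Uext, ?_, hext⟩
  refine continuous_iff_continuousAt.mpr fun w => ?_
  rw [ContinuousAt, nhds_discrete ℤ, Filter.tendsto_pure]
  have hN : (⋂ v ∈ S, if w ∈ Uv v then Uv v else (Uv v)ᶜ) ∈ 𝓝 w := by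
    refine IsOpen.mem_nhds ?_ ?_
    · refine isOpen_biInter_finset fun v _ => ?_
      split_ifs
      · exact (hUv v).1.2
      · exact (hUv v).1.compl.2
    · simp only [Set.mem_iInter]
      intro v _
      split_ifs with h
      · exact h
      · exact h
  refine Filter.eventually_of_mem hN fun w' hw' => ?_
  have hiff : ∀ v ∈ S, ((w' ∈ Uv v) ↔ (w ∈ Uv v)) := by
    intro v hv
    simp only [Set.mem_iInter] at hw'
    have := hw' v hv
    split_ifs at this with h
    · exact ⟨fun _ => h, fun _ => this⟩
    · exact ⟨fun hmem => absurd hmem this, fun hmem => absurd hmem h⟩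
  have : S.filter (fun v => w' ∈ Uv v) = S.filter (fun v => w ∈ Uv v) := by
    apply Finset.ext
    intro v
    simp only [Finset.mem_filter]
    exact ⟨fun ⟨h1, h2⟩ => ⟨h1, (hiff v h1).mp h2⟩, fun ⟨h1, h2⟩ => ⟨h1, (hiff v h1).mpr h2⟩⟩
  rw [hUext_def]
  simp only
  rw [this]

end CBPauxsec




lemma cbp_of_embedding {Y M : Type*} [TopologicalSpace Y] [TopologicalSpace M]
    {e : Y → M} (he : Topology.IsEmbedding e) (hM : CBPaux M) : CBPaux Y := by
  intro x O hO hx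
  obtain ⟨O', hO', hOeq⟩ := he.isOpen_iff.mp hO
  obtain ⟨U', hU', heU', hsub⟩ := hM (e x) O' hO' (by rw [← hOeq] at hx; exact hx)
  refine ⟨e ⁻¹' U', ⟨hU'.1.preimage he.continuous, hU'.2.preimage he.continuous⟩, heU', ?_⟩
  intro y hy
  rw [← hOeq]
  exact hsub hy

lemma cbp_of_compact_t2_totdisc {M : Type*} [TopologicalSpace M] [CompactSpace M]
    [T2Space M] [TotallyDisconnectedSpace M] : CBPaux M := by
  intro x O hO hx
  obtain ⟨U, hU, hxU, hsub⟩ :=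
    loc_compact_Haus_tot_disc_of_zero_dim.exists_subset_of_mem_open hx hO
  exact ⟨U, hU, hxU, hsub⟩

lemma cbp_pi_nat : CBPaux (ℕ → ℕ) := by
  intro x O hO hx
  obtain ⟨I, u, hu, hsub⟩ := isOpen_pi_iff.mp hO x hx
  refine ⟨(I : Set ℕ).pi (fun i => {x i}), ?_, ?_, ?_⟩
  · rw [Set.pi_def]
    exact isClopen_biInter_finset fun i _ =>
      (isClopen_discrete ({x i} : Set ℕ)).preimage (continuous_apply i)
  · intro i _
    rfl
  · intro y hy
    refine hsub ?_
    intro i hi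
    have := hy i hi
    simp only [Set.mem_singleton_iff] at this
    rw [this]
    exact (hu i hi).2

lemma cbp_prod {A B : Type*} [TopologicalSpace A] [TopologicalSpace B]
    (hA : CBPaux A) (hB : CBPaux B) : CBPaux (A × B) := by
  rintro ⟨x, y⟩ O hO hxy
  obtain ⟨O1, O2, hO1, hO2, hx1, hy2, hsub⟩ := isOpen_prod_iff.mp hO x y hxy
  obtain ⟨U1, hU1, hxU1, hsub1⟩ := hA x O1 hO1 hx1
  obtain ⟨U2, hU2, hyU2, hsub2⟩ := hB y O2 hO2 hy2
  refine ⟨U1 ×ˢ U2, hU1.prod hU2, ⟨hxU1, hyU2⟩, ?_⟩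
  intro z hz
  exact hsub (Set.mk_mem_prod (hsub1 hz.1) (hsub2 hz.2))

lemma bounded_of_compact {Q : Set (ℕ → ℤ)} (hQ : IsCompact Q) :
    ∃ a : ℕ → ℤ, (∀ n, 0 ≤ a n) ∧ ∀ z ∈ Q, ∀ n, |z n| ≤ a n := by
  have hfin : ∀ n : ℕ, ((fun z : ℕ → ℤ => |z n|) '' Q).Finite :=
    fun n => (hQ.image ((continuous_apply n).abs)).finite ⟨inferInstance⟩
  have hbd : ∀ n : ℕ, ∃ b : ℤ, ∀ z ∈ Q, |z n| ≤ b := by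
    intro n
    obtain ⟨b, hb⟩ := (hfin n).bddAbove
    exact ⟨b, fun z hz => hb (Set.mem_image_of_mem _ hz)⟩
  choose b hb using hbd
  exact ⟨fun n => max 0 (b n), fun n => le_max_left _ _,
    fun z hz n => le_trans (hb n z hz) (le_max_right _ _)⟩

lemma sigma_nonempty {c : ℤ} (hc : 0 ≤ c) :
    Nonempty ({m : ℤ // c < |m|} ≃ {pq : ℤ × ℤ // c < |pq.1| ∨ pq.2 ≠ 0}) := by
  have h1 : Infinite {m : ℤ // c < |m|} := by
    refine Infinite.of_injective (fun j : ℕ => ⟨c + 1 + j, ?_⟩) ?_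
    · rw [abs_of_nonneg (by positivity)]
      omega
    · intro i j hij
      simp only [Subtype.mk.injEq] at hij
      omega
  have h2 : Infinite {pq : ℤ × ℤ // c < |pq.1| ∨ pq.2 ≠ 0} := by
    refine Infinite.of_injective (fun j : ℕ => ⟨(0, (j : ℤ) + 1), Or.inr (by omega)⟩) ?_
    intro i j hij
    simp only [Subtype.mk.injEq, Prod.mk.injEq] at hij
    omega
  obtain ⟨d1⟩ := nonempty_denumerable {m : ℤ // c < |m|}
  obtain ⟨d2⟩ := nonempty_denumerable {pq : ℤ × ℤ // c < |pq.1| ∨ pq.2 ≠ 0}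
  exact ⟨(@Denumerable.eqv _ d1).trans (@Denumerable.eqv _ d2).symm⟩

/-- homeomorphism between discrete spaces from an equiv -/
def discHomeo {α β : Type*} [TopologicalSpace α] [TopologicalSpace β]
    [DiscreteTopology α] [DiscreteTopology β] (e : α ≃ β) : α ≃ₜ β where
  toEquiv := e
  continuous_toFun := continuous_of_discreteTopology
  continuous_invFun := continuous_of_discreteTopology


section Main

universe u

/-- A space is *0-dimensional* if it admits a dense topological embedding into a
compact Hausdorff totally disconnected space (a compactification of covering dimension 0). -/
def ZeroDimensional (Y : Type u) [TopologicalSpace Y] : Prop :=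
  ∃ (Z : Type u) (_ : TopologicalSpace Z), CompactSpace Z ∧ T2Space Z ∧
    TotallyDisconnectedSpace Z ∧ ∃ e : Y → Z, Topology.IsEmbedding e ∧ DenseRange e

/-- **Lemma 2.1**: let `X` be a 0-dimensional space and `P`, `K` compact subsets of
`X × ℕ^ℕ`.  If `f : P → K` and `g : X → X` are homeomorphisms with `g ∘ π_X = π_X ∘ f`,
then `f` extends to a homeomorphism `f̃` of `X × ℕ^ℕ` such that `g ∘ π_X = π_X ∘ f̃`. -/
theorem stmt2 {X : Type u} [TopologicalSpace X] (hX : ZeroDimensional X)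
    (P K : Set (X × (ℕ → ℕ))) (hP : IsCompact P) (hK : IsCompact K)
    (f : ↥P ≃ₜ ↥K) (g : X ≃ₜ X)
    (hfg : ∀ p : P, g ((p : X × (ℕ → ℕ)).1) = (f p : X × (ℕ → ℕ)).1) :
    ∃ F : (X × (ℕ → ℕ)) ≃ₜ (X × (ℕ → ℕ)),
      (∀ p : P, F (p : X × (ℕ → ℕ)) = (f p : X × (ℕ → ℕ))) ∧
      (∀ z : X × (ℕ → ℕ), (F z).1 = g z.1) := by
  classical
  obtain ⟨M, tM, hcomp, ht2, htd, e, he, -⟩ := hX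
  haveI : T2Space X := he.t2Space
  have hcbX : CBPaux X := cbp_of_embedding he cbp_of_compact_t2_totdisc
  have hcbW : CBPaux (X × (ℕ → ℕ)) := cbp_prod hcbX cbp_pi_nat
  -- transport fibers to ℕ → ℤ
  let T : (ℕ → ℕ) ≃ₜ (ℕ → ℤ) :=
    Homeomorph.piCongrRight fun _ => discHomeo (Denumerable.eqv ℤ).symm
  -- bound for the compact set P ∪ K
  have hQ : IsCompact ((fun w : X × (ℕ → ℕ) => T w.2) '' (P ∪ K)) :=
    (hP.union hK).image (T.continuous.comp continuous_snd)
  obtain ⟨a, ha0, hbd⟩ := bounded_of_compact hQ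
  have hbdC : ∀ w ∈ P ∪ K, ∀ n, |T w.2 n| ≤ a n := fun w hw n =>
    hbd _ (Set.mem_image_of_mem _ hw) n
  -- the equivalences σ
  have hσ : ∀ n, Nonempty ({m : ℤ // a n < |m|} ≃ {pq : ℤ × ℤ // a n < |pq.1| ∨ pq.2 ≠ 0}) :=
    fun n => sigma_nonempty (ha0 n)
  let σ := fun n => (hσ n).some
  let k : (ℕ → ℤ) ≃ₜ ((ℕ → ℤ) × (ℕ → ℤ)) := khom a σ
  -- the fiberwise translation maps Φ and Ψ
  have hΦn : ∀ n : ℕ, ∃ Φn : X × (ℕ → ℕ) → ℤ, Continuous Φn ∧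
      ∀ p : P, Φn p = T ((f p : X × (ℕ → ℕ)).2) n := fun n =>
    cbp_extend hcbW hP (fun p => T ((f p : X × (ℕ → ℕ)).2) n)
      ((continuous_apply n).comp (T.continuous.comp
        (continuous_snd.comp (continuous_subtype_val.comp f.continuous))))
  choose Φn hΦnc hΦne using hΦn
  have hΨn : ∀ n : ℕ, ∃ Ψn : X × (ℕ → ℕ) → ℤ, Continuous Ψn ∧
      ∀ q : K, Ψn q = T ((f.symm q : X × (ℕ → ℕ)).2) n := fun n =>
    cbp_extend hcbW hK (fun q => T ((f.symm q : X × (ℕ → ℕ)).2) n)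
      ((continuous_apply n).comp (T.continuous.comp
        (continuous_snd.comp (continuous_subtype_val.comp f.symm.continuous))))
  choose Ψn hΨnc hΨne using hΨn
  let Φ : X × (ℕ → ℤ) → (ℕ → ℤ) := fun w n => Φn n (w.1, T.symm w.2)
  have hΦc : Continuous Φ := continuous_pi fun n =>
    (hΦnc n).comp (continuous_fst.prodMk (T.symm.continuous.comp continuous_snd))
  have hΦe : ∀ p : P, Φ ((p : X × (ℕ → ℕ)).1, T (p : X × (ℕ → ℕ)).2)
      = T ((f p : X × (ℕ → ℕ)).2) := by
    intro p
    funext n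
    show Φn n ((p : X × (ℕ → ℕ)).1, T.symm (T (p : X × (ℕ → ℕ)).2)) = _
    rw [T.symm_apply_apply]
    exact hΦne n p
  let Ψ : X × (ℕ → ℤ) → (ℕ → ℤ) := fun w n => Ψn n (w.1, T.symm w.2)
  have hΨc : Continuous Ψ := continuous_pi fun n =>
    (hΨnc n).comp (continuous_fst.prodMk (T.symm.continuous.comp continuous_snd))
  have hΨe : ∀ q : K, Ψ ((q : X × (ℕ → ℕ)).1, T (q : X × (ℕ → ℕ)).2)
      = T ((f.symm q : X × (ℕ → ℕ)).2) := by
    intro q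
    funext n
    show Ψn n ((q : X × (ℕ → ℕ)).1, T.symm (T (q : X × (ℕ → ℕ)).2)) = _
    rw [T.symm_apply_apply]
    exact hΨne n q
  -- the five homeomorphisms
  let E : (X × (ℕ → ℕ)) ≃ₜ (X × ((ℕ → ℤ) × (ℕ → ℤ))) :=
    { toFun := fun w => (w.1, k (T w.2))
      invFun := fun w => (w.1, T.symm (k.symm w.2))
      left_inv := fun w => by simp
      right_inv := fun w => by simp
      continuous_toFun := continuous_fst.prodMk
        ((k.continuous.comp T.continuous).comp continuous_snd)
      continuous_invFun := continuous_fst.prodMk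
        ((T.symm.continuous.comp k.symm.continuous).comp continuous_snd) }
  let A : (X × ((ℕ → ℤ) × (ℕ → ℤ))) ≃ₜ (X × ((ℕ → ℤ) × (ℕ → ℤ))) :=
    { toFun := fun w => (w.1, (w.2.1, w.2.2 + Φ (w.1, w.2.1)))
      invFun := fun w => (w.1, (w.2.1, w.2.2 - Φ (w.1, w.2.1)))
      left_inv := fun w => by simp
      right_inv := fun w => by simp
      continuous_toFun := continuous_fst.prodMk
        ((continuous_fst.comp continuous_snd).prodMk
          (((continuous_snd.comp continuous_snd).add
            (hΦc.comp (continuous_fst.prodMk (continuous_fst.comp continuous_snd))))))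
      continuous_invFun := continuous_fst.prodMk
        ((continuous_fst.comp continuous_snd).prodMk
          (((continuous_snd.comp continuous_snd).sub
            (hΦc.comp (continuous_fst.prodMk (continuous_fst.comp continuous_snd)))))) }
  let B : (X × ((ℕ → ℤ) × (ℕ → ℤ))) ≃ₜ (X × ((ℕ → ℤ) × (ℕ → ℤ))) :=
    { toFun := fun w => (w.1, (w.2.1 - Ψ (g w.1, w.2.2), w.2.2))
      invFun := fun w => (w.1, (w.2.1 + Ψ (g w.1, w.2.2), w.2.2))
      left_inv := fun w => by simp
      right_inv := fun w => by simp
      continuous_toFun := continuous_fst.prodMk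
        (((continuous_fst.comp continuous_snd).sub
            (hΨc.comp ((g.continuous.comp continuous_fst).prodMk
              (continuous_snd.comp continuous_snd)))).prodMk
          (continuous_snd.comp continuous_snd))
      continuous_invFun := continuous_fst.prodMk
        (((continuous_fst.comp continuous_snd).add
            (hΨc.comp ((g.continuous.comp continuous_fst).prodMk
              (continuous_snd.comp continuous_snd)))).prodMk
          (continuous_snd.comp continuous_snd)) }
  let Sw : (X × ((ℕ → ℤ) × (ℕ → ℤ))) ≃ₜ (X × ((ℕ → ℤ) × (ℕ → ℤ))) :=
    { toFun := fun w => (w.1, (w.2.2, w.2.1))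
      invFun := fun w => (w.1, (w.2.2, w.2.1))
      left_inv := fun w => rfl
      right_inv := fun w => rfl
      continuous_toFun := continuous_fst.prodMk
        ((continuous_snd.comp continuous_snd).prodMk (continuous_fst.comp continuous_snd))
      continuous_invFun := continuous_fst.prodMk
        ((continuous_snd.comp continuous_snd).prodMk (continuous_fst.comp continuous_snd)) }
  let Gh : (X × ((ℕ → ℤ) × (ℕ → ℤ))) ≃ₜ (X × ((ℕ → ℤ) × (ℕ → ℤ))) :=
    { toFun := fun w => (g w.1, w.2)
      invFun := fun w => (g.symm w.1, w.2)
      left_inv := fun w => by simp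
      right_inv := fun w => by simp
      continuous_toFun := (g.continuous.comp continuous_fst).prodMk continuous_snd
      continuous_invFun := (g.symm.continuous.comp continuous_fst).prodMk continuous_snd }
  refine ⟨E.trans (A.trans (B.trans (Sw.trans (Gh.trans E.symm)))), ?_, ?_⟩
  · intro p
    have hp : (p : X × (ℕ → ℕ)) ∈ P := p.2
    have hfp : (f p : X × (ℕ → ℕ)) ∈ K := (f p).2
    have hkp : k (T (p : X × (ℕ → ℕ)).2) = (T (p : X × (ℕ → ℕ)).2, 0) :=
      kfun_bounded a σ fun m => hbdC _ (Or.inl hp) m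
    have hkfp : k.symm (T (f p : X × (ℕ → ℕ)).2, 0) = T (f p : X × (ℕ → ℕ)).2 :=
      khom_symm_bounded a σ fun m => hbdC _ (Or.inr hfp) m
    show E.symm (Gh (Sw (B (A (E (p : X × (ℕ → ℕ))))))) = (f p : X × (ℕ → ℕ))
    have h1 : E (p : X × (ℕ → ℕ))
        = ((p : X × (ℕ → ℕ)).1, (T (p : X × (ℕ → ℕ)).2, 0)) := by
      show ((p : X × (ℕ → ℕ)).1, k (T (p : X × (ℕ → ℕ)).2)) = _
      rw [hkp]
    rw [h1]
    have h2 : A ((p : X × (ℕ → ℕ)).1, (T (p : X × (ℕ → ℕ)).2, 0))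
        = ((p : X × (ℕ → ℕ)).1, (T (p : X × (ℕ → ℕ)).2, T ((f p : X × (ℕ → ℕ)).2))) := by
      show ((p : X × (ℕ → ℕ)).1, (T (p : X × (ℕ → ℕ)).2,
        0 + Φ ((p : X × (ℕ → ℕ)).1, T (p : X × (ℕ → ℕ)).2))) = _
      rw [hΦe p, zero_add]
    rw [h2]
    have hΨval : Ψ (g (p : X × (ℕ → ℕ)).1, T ((f p : X × (ℕ → ℕ)).2))
        = T (p : X × (ℕ → ℕ)).2 := by
      have := hΨe (f p)
      rw [← hfg p] at this
      rw [this, f.symm_apply_apply]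
    have h3 : B ((p : X × (ℕ → ℕ)).1, (T (p : X × (ℕ → ℕ)).2, T ((f p : X × (ℕ → ℕ)).2)))
        = ((p : X × (ℕ → ℕ)).1, (0, T ((f p : X × (ℕ → ℕ)).2))) := by
      show ((p : X × (ℕ → ℕ)).1, (T (p : X × (ℕ → ℕ)).2 -
        Ψ (g (p : X × (ℕ → ℕ)).1, T ((f p : X × (ℕ → ℕ)).2)),
        T ((f p : X × (ℕ → ℕ)).2))) = _
      rw [hΨval, sub_self]
    rw [h3]
    show (g (p : X × (ℕ → ℕ)).1, T.symm (k.symm (T ((f p : X × (ℕ → ℕ)).2), 0)))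
      = (f p : X × (ℕ → ℕ))
    rw [hkfp, T.symm_apply_apply, hfg p]
  · intro z
    rfl

end Main
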